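/- For all nonnegative integers n, m the following polynomial identity in the variable β holds: Σ_{k=0}^{min(n,m)} C(n+m−k, m)·C(m, k)·β^k = Σ_{k=0}^{min(n,m)} C(n, k)·C(m, k)·(1+β)^k, where C(a,b) denotes the binomial coefficient. In particular, both sides at β = 1 equal the Delannoy number D(n,m). -/

import Mathlib

open Finset

-- Vandermonde-style sum
lemma aux1 (n m j : ℕ) (hjn : j ≤ n) (hjm : j ≤ m) :
    ∑ t ∈ range (n - j + 1), n.choose (j + t) * (m - j).choose t
      = (n + m - j).choose m := by
  have h1 : (n + m - j).choose m = (n + (m - j)).choose (n - j) := by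
    have e1 : n + m - j = n + (m - j) := by omega
    rw [e1, ← Nat.choose_symm (by omega : n - j ≤ n + (m - j))]
    congr 1
    omega
  rw [h1, Nat.add_choose_eq, Finset.Nat.sum_antidiagonal_eq_sum_range_succ_mk,
    ← Finset.sum_range_reflect]
  apply Finset.sum_congr rfl
  intro t ht
  simp only [mem_range] at ht
  have h2 : n - j + 1 - 1 - t = n - j - t := by omega
  rw [h2]
  simp only []
  congr 1
  rw [← Nat.choose_symm (by omega : t ≤ n)]
  congr 1
  omega

lemma aux2 (n m j : ℕ) (hjn : j ≤ n) (hjm : j ≤ m) :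
    ∑ k ∈ range (n + 1), n.choose k * (m.choose k * k.choose j)
      = (n + m - j).choose m * m.choose j := by
  have h1 : ∑ k ∈ range (n + 1), n.choose k * (m.choose k * k.choose j)
      = ∑ k ∈ Ico j (n + 1), n.choose k * (m.choose k * k.choose j) := by
    refine (Finset.sum_subset ?_ ?_).symm
    · intro x hx
      simp only [mem_Ico] at hx
      simp only [mem_range]
      omega
    · intro x hx hnx
      simp only [mem_range] at hx
      simp only [mem_Ico, not_and, not_lt] at hnx
      have hxj : x < j := by
        by_contra h
        exact absurd hx (by simpa using hnx (by omega))
      rw [Nat.choose_eq_zero_of_lt hxj]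
      ring
  rw [h1, Finset.sum_Ico_eq_sum_range]
  have h2 : n + 1 - j = n - j + 1 := by omega
  rw [h2]
  have h3 : ∀ t ∈ range (n - j + 1), n.choose (j + t) * (m.choose (j + t) * (j + t).choose j)
      = (n.choose (j + t) * (m - j).choose t) * m.choose j := by
    intro t ht
    by_cases h : j + t ≤ m
    · rw [Nat.choose_mul (n := m) (by omega : j ≤ j + t)]
      have : j + t - j = t := by omega
      rw [this]; ring
    · rw [Nat.choose_eq_zero_of_lt (by omega : m < j + t),
        Nat.choose_eq_zero_of_lt (by omega : m - j < t)]
      ring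
  rw [Finset.sum_congr rfl h3, ← Finset.sum_mul, aux1 n m j hjn hjm]

lemma key (n m j : ℕ) :
    ∑ k ∈ range (min n m + 1), n.choose k * m.choose k * k.choose j
      = if j ≤ min n m then (n + m - j).choose m * m.choose j else 0 := by
  by_cases hj : j ≤ min n m
  · rw [if_pos hj]
    have hext : ∑ k ∈ range (min n m + 1), n.choose k * m.choose k * k.choose j
        = ∑ k ∈ range (n + 1), n.choose k * m.choose k * k.choose j := by
      apply Finset.sum_subset (Finset.range_subset_range.2 (by omega))
      intro x hx hnx
      simp only [mem_range] at hx hnx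
      have : m < x := by omega
      rw [Nat.choose_eq_zero_of_lt this]
      ring
    rw [hext]
    have := aux2 n m j (by omega) (by omega)
    rw [← this]
    apply Finset.sum_congr rfl
    intros; ring
  · rw [if_neg hj]
    apply Finset.sum_eq_zero
    intro k hk
    simp only [mem_range] at hk
    rw [Nat.choose_eq_zero_of_lt (by omega : k < j)]
    ring

theorem stmt_6 (n m : ℕ) :
    ∑ k ∈ Finset.range (min n m + 1),
        Polynomial.C (((n + m - k).choose m * m.choose k : ℕ) : ℤ) * Polynomial.X ^ k =
    ∑ k ∈ Finset.range (min n m + 1),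
        Polynomial.C ((n.choose k * m.choose k : ℕ) : ℤ) * (1 + Polynomial.X) ^ k := by
  ext j
  rw [Polynomial.finset_sum_coeff, Polynomial.finset_sum_coeff]
  have hL : ∀ k ∈ range (min n m + 1),
      (Polynomial.C (((n + m - k).choose m * m.choose k : ℕ) : ℤ) * Polynomial.X ^ k).coeff j
        = if j = k then (((n + m - k).choose m * m.choose k : ℕ) : ℤ) else 0 := by
    intro k _
    rw [Polynomial.coeff_C_mul, Polynomial.coeff_X_pow]
    split <;> ring
  have hR : ∀ k ∈ range (min n m + 1),
      (Polynomial.C ((n.choose k * m.choose k : ℕ) : ℤ) * (1 + Polynomial.X) ^ k).coeff j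
        = ((n.choose k * m.choose k * k.choose j : ℕ) : ℤ) := by
    intro k _
    rw [Polynomial.coeff_C_mul, add_comm (1 : Polynomial ℤ), Polynomial.coeff_X_add_one_pow]
    push_cast
    ring
  rw [Finset.sum_congr rfl hL, Finset.sum_congr rfl hR, Finset.sum_ite_eq (range (min n m + 1)) j]
  have hkey := key n m j
  have hcast : ∑ k ∈ range (min n m + 1), ((n.choose k * m.choose k * k.choose j : ℕ) : ℤ)
      = ((∑ k ∈ range (min n m + 1), n.choose k * m.choose k * k.choose j : ℕ) : ℤ) := by
    push_cast; rfl
  rw [hcast, hkey]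
  split
  · next h =>
    simp only [mem_range] at h
    rw [if_pos (by omega : j ≤ min n m)]
  · next h =>
    simp only [mem_range] at h
    rw [if_neg (by omega : ¬ j ≤ min n m)]
    norm_num
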